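/- arXiv:2410.14300 — 2 statements merged into one kernel-verified Lean document; each statement's English description precedes it below -/
import Mathlib

section
/- Let 1 ≤ d ≤ 3, p ≥ 2, C_0 > 0 and μ > 0, and let u(x) = [μ − C_0|x|^p]_+^{1/4} for x ∈ ℝ^d. Then the gradient of u is not square-integrable: ∫_{B(0,(μ/C_0)^{1/p})} |∇u(x)|² dx = +∞, where on the open ball B(0,(μ/C_0)^{1/p}) one has |∇u(x)|² = (p²C_0²/16)(μ − C_0|x|^p)^{−3/2}|x|^{2(p−1)}. -/
open MeasureTheory Filter

noncomputable section

abbrev Euc (d : ℕ) := EuclideanSpace ℝ (Fin d)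

def atInfty (d : ℕ) : Filter (Euc d) := Filter.comap (fun x => ‖x‖) Filter.atTop

def V1cond (d : ℕ) (V : Euc d → ℝ) : Prop :=
  ContDiff ℝ 1 V ∧ (∀ x, 0 ≤ V x) ∧ ∀ x y : Euc d, ‖x‖ ≤ ‖y‖ → V x ≤ V y

def V2cond (d : ℕ) (V : Euc d → ℝ) (C₀ p : ℝ) : Prop :=
  Tendsto (fun x : Euc d => (inner ℝ (gradient V x) x : ℝ) / (p * ‖x‖ ^ p)) (atInfty d) (nhds C₀)

def V3cond (d : ℕ) (V : Euc d → ℝ) (C₀ C₁ p α : ℝ) : Prop :=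
  Tendsto (fun x : Euc d => ((inner ℝ (gradient V x) x : ℝ) - C₀ * p * ‖x‖ ^ p) / ‖x‖ ^ α)
    (atInfty d) (nhds C₁)

def V4cond (d : ℕ) (V : Euc d → ℝ) (C₀ C₂ p α : ℝ) : Prop :=
  Tendsto (fun x : Euc d => (V x - C₀ * ‖x‖ ^ p) / ‖x‖ ^ α) (atInfty d) (nhds C₂)

def InH1 (d : ℕ) (V : Euc d → ℝ) (m : ℝ) (φ : Euc d → ℝ) : Prop :=
  MemLp φ 2 volume ∧
  Integrable (fun x : Euc d => ‖fderiv ℝ φ x‖ ^ 2) volume ∧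
  Integrable (fun x : Euc d => V x * φ x ^ 2) volume ∧
  ∫ x : Euc d, φ x ^ 2 = m

def EnergyN (d : ℕ) (V : Euc d → ℝ) (κ N : ℝ) (φ : Euc d → ℝ) : ℝ :=
  (1/2) * ∫ x : Euc d, (‖fderiv ℝ φ x‖ ^ 2 + V x * φ x ^ 2) +
  (κ * N / 4) * ∫ x : Euc d, φ x ^ 4 +
  (N ^ 2 / 6) * ∫ x : Euc d, φ x ^ 6

def glevel (d : ℕ) (V : Euc d → ℝ) (κ N : ℝ) : ℝ :=
  sInf ((EnergyN d V κ N) '' {φ | InH1 d V 1 φ})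

def IsGroundState (d : ℕ) (V : Euc d → ℝ) (κ N : ℝ) (φ : Euc d → ℝ) : Prop :=
  InH1 d V 1 φ ∧ ∀ ψ, InH1 d V 1 ψ → EnergyN d V κ N φ ≤ EnergyN d V κ N ψ

def omegaSurf (d : ℕ) : ℝ := d * (volume (Metric.ball (0 : Euc d) 1)).toReal

def BetaFn (P Q : ℝ) : ℝ := ∫ x in (0:ℝ)..1, x ^ (P - 1) * (1 - x) ^ (Q - 1)

def muTF (d : ℕ) (C₀ p : ℝ) : ℝ :=
  (p / (omegaSurf d * C₀ ^ (-(d : ℝ) / p) * BetaFn ((d : ℝ) / p) (3/2))) ^ (2 * p / (2 * (d:ℝ) + p))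

def uTF (d : ℕ) (C₀ p : ℝ) (x : Euc d) : ℝ :=
  (max 0 (muTF d C₀ p - C₀ * ‖x‖ ^ p)) ^ ((1:ℝ)/4)

def TFadm (d : ℕ) (p : ℝ) (u : Euc d → ℝ) : Prop :=
  MemLp u 2 volume ∧ MemLp u 6 volume ∧
  Integrable (fun x : Euc d => ‖x‖ ^ p * u x ^ 2) volume ∧
  ∫ x : Euc d, u x ^ 2 = 1

def ETF (d : ℕ) (C₀ p : ℝ) (u : Euc d → ℝ) : ℝ :=
  (C₀ / 2) * ∫ x : Euc d, ‖x‖ ^ p * u x ^ 2 + (1/6) * ∫ x : Euc d, u x ^ 6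

def eTFinf (d : ℕ) (C₀ p : ℝ) : ℝ := sInf ((ETF d C₀ p) '' {u | TFadm d p u})

def Itau (d : ℕ) (V : Euc d → ℝ) (κ p τ : ℝ) (u : Euc d → ℝ) : ℝ :=
  (τ ^ (p + 2) / 2) * ∫ x : Euc d, ‖fderiv ℝ u x‖ ^ 2 +
  (τ ^ p / 2) * ∫ x : Euc d, V (τ⁻¹ • x) * u x ^ 2 +
  (κ * τ ^ (p/2) / 4) * ∫ x : Euc d, u x ^ 4 +
  (1/6) * ∫ x : Euc d, u x ^ 6

def etau (d : ℕ) (V : Euc d → ℝ) (κ p τ : ℝ) : ℝ :=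
  sInf ((Itau d V κ p τ) '' {u | InH1 d V 1 u})

def lap (d : ℕ) (u : Euc d → ℝ) (x : Euc d) : ℝ :=
  ∑ i : Fin d, fderiv ℝ (fun y => fderiv ℝ u y (EuclideanSpace.single i 1)) x (EuclideanSpace.single i 1)



lemma pow_sub_pow_lb {d : ℕ} (hd1 : 1 ≤ d) (hd3 : d ≤ 3) {a b : ℝ} (hb : 0 ≤ b) (hab : b ≤ a) :
    b ^ (d - 1) * (a - b) ≤ a ^ d - b ^ d := by
  interval_cases d <;> norm_num
  · nlinarith
  · nlinarith [mul_nonneg (mul_nonneg (sub_nonneg.2 hab) (hb.trans hab)) (add_nonneg (hb.trans hab) hb)]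

set_option maxHeartbeats 1600000 in
/-- the gradient of the Thomas-Fermi profile is not square-integrable. -/
theorem thomas_fermi_gradient_not_square_integrable
    (d : ℕ) (hd1 : 1 ≤ d) (hd3 : d ≤ 3) (C₀ p μ : ℝ) (hC₀ : 0 < C₀) (hp : 2 ≤ p)
    (hμ : 0 < μ) (u : Euc d → ℝ)
    (hu : u = fun x : Euc d => (max 0 (μ - C₀ * ‖x‖ ^ p)) ^ ((1:ℝ)/4)) :
    (∀ x ∈ Metric.ball (0 : Euc d) ((μ / C₀) ^ (1 / p)),
      ‖gradient u x‖ ^ 2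
        = (p ^ 2 * C₀ ^ 2 / 16) * (μ - C₀ * ‖x‖ ^ p) ^ (-(3:ℝ)/2) * ‖x‖ ^ (2 * (p - 1))) ∧
    ∫⁻ x in Metric.ball (0 : Euc d) ((μ / C₀) ^ (1 / p)),
      ENNReal.ofReal
        ((p ^ 2 * C₀ ^ 2 / 16) * (μ - C₀ * ‖x‖ ^ p) ^ (-(3:ℝ)/2) * ‖x‖ ^ (2 * (p - 1)))
      = ⊤ := by
  have hp0 : (0:ℝ) < p := by linarith
  have hp1 : (1:ℝ) ≤ p := by linarith
  have hμC : (0:ℝ) < μ / C₀ := div_pos hμ hC₀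
  set R : ℝ := (μ / C₀) ^ (1 / p) with hRdef
  have hR : 0 < R := Real.rpow_pos_of_pos hμC _
  have hRp : R ^ p = μ / C₀ := by
    rw [hRdef, ← Real.rpow_mul hμC.le, one_div_mul_cancel hp0.ne', Real.rpow_one]
  have hCRp : C₀ * R ^ p = μ := by rw [hRp]; field_simp
  have key : ∀ y : Euc d, ((‖y‖ ^ 2 : ℝ)) ^ (p/2) = ‖y‖ ^ p := by
    intro y
    rw [← Real.rpow_natCast ‖y‖ 2, ← Real.rpow_mul (norm_nonneg y)]
    congr 1
    push_cast
    ring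
  have hpos : ∀ y : Euc d, ‖y‖ < R → 0 < μ - C₀ * ‖y‖ ^ p := by
    intro y hy
    have h1 : ‖y‖ ^ p < R ^ p := Real.rpow_lt_rpow (norm_nonneg y) hy hp0
    have h2 : C₀ * ‖y‖ ^ p < C₀ * R ^ p := mul_lt_mul_of_pos_left h1 hC₀
    rw [hCRp] at h2
    linarith
  have hgrad : ∀ x : Euc d, ‖x‖ < R →
      HasGradientAt u
        ((2 * ((1:ℝ)/4 * (μ - C₀ * (‖x‖ ^ 2 : ℝ) ^ (p/2)) ^ ((1:ℝ)/4 - 1) *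
            (-(C₀ * (p / 2 * (‖x‖ ^ 2 : ℝ) ^ (p / 2 - 1)))))) • x) x := by
    intro x hx
    set t : ℝ := ‖x‖ ^ 2 with ht
    have hspos : 0 < μ - C₀ * t ^ (p/2) := by rw [ht, key]; exact hpos x hx
    have h1 : HasDerivAt (fun t : ℝ => t ^ (p/2)) (p/2 * t ^ (p/2 - 1)) t :=
      Real.hasDerivAt_rpow_const (Or.inr (by linarith))
    have h2 : HasDerivAt (fun t : ℝ => μ - C₀ * t ^ (p/2))
        (-(C₀ * (p/2 * t ^ (p/2 - 1)))) t := (h1.const_mul C₀).const_sub μ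
    have h3 : HasDerivAt (fun s : ℝ => s ^ ((1:ℝ)/4))
        ((1:ℝ)/4 * (μ - C₀ * t ^ (p/2)) ^ ((1:ℝ)/4 - 1)) (μ - C₀ * t ^ (p/2)) :=
      Real.hasDerivAt_rpow_const (Or.inl hspos.ne')
    have h4 := h3.comp t h2
    have h5 : HasFDerivAt (fun y : Euc d => ‖y‖ ^ 2) (2 • (innerSL ℝ x)) x :=
      (hasStrictFDerivAt_norm_sq x).hasFDerivAt
    have h6 := h4.comp_hasFDerivAt x h5
    have heq : u =ᶠ[nhds x]
        fun y : Euc d => (μ - C₀ * (‖y‖ ^ 2 : ℝ) ^ (p/2)) ^ ((1:ℝ)/4) := by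
      have hball : Metric.ball (0 : Euc d) R ∈ nhds x :=
        Metric.isOpen_ball.mem_nhds (mem_ball_zero_iff.2 hx)
      filter_upwards [hball] with y hy
      have hy' : ‖y‖ < R := mem_ball_zero_iff.1 hy
      simp only [hu]
      rw [key y, max_eq_right (hpos y hy').le]
    rw [hasGradientAt_iff_hasFDerivAt]
    have hlin : (InnerProductSpace.toDual ℝ (Euc d))
        ((2 * ((1:ℝ)/4 * (μ - C₀ * t ^ (p/2)) ^ ((1:ℝ)/4 - 1) *
            (-(C₀ * (p / 2 * t ^ (p / 2 - 1)))))) • x)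
        = ((1:ℝ)/4 * (μ - C₀ * t ^ (p/2)) ^ ((1:ℝ)/4 - 1) * -(C₀ * (p / 2 * t ^ (p / 2 - 1)))) •
            (2 • innerSL ℝ x) := by
      ext y
      simp [InnerProductSpace.toDual_apply_apply, real_inner_smul_left]
      ring
    refine HasFDerivAt.congr_of_eventuallyEq ?_ heq
    rw [hlin]
    exact h6
  have part1 : ∀ x ∈ Metric.ball (0 : Euc d) R,
      ‖gradient u x‖ ^ 2
        = (p ^ 2 * C₀ ^ 2 / 16) * (μ - C₀ * ‖x‖ ^ p) ^ (-(3:ℝ)/2) * ‖x‖ ^ (2 * (p - 1)) := by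
    intro x hx
    rw [mem_ball_zero_iff] at hx
    have hg := (hgrad x hx).gradient
    rw [hg]
    set c : ℝ := (2 * ((1:ℝ)/4 * (μ - C₀ * (‖x‖ ^ 2 : ℝ) ^ (p/2)) ^ ((1:ℝ)/4 - 1) *
            (-(C₀ * (p / 2 * (‖x‖ ^ 2 : ℝ) ^ (p / 2 - 1)))))) with hcdef
    have hnorm : ‖c • x‖ ^ 2 = c ^ 2 * ‖x‖ ^ 2 := by
      rw [norm_smul, mul_pow, Real.norm_eq_abs, sq_abs]
    rw [hnorm]
    rcases eq_or_lt_of_le (norm_nonneg x) with hn0 | hn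
    · rw [← hn0]
      rw [Real.zero_rpow (by intro h; nlinarith : 2 * (p - 1) ≠ 0)]
      norm_num [← hn0]
    · have hs : 0 < μ - C₀ * ‖x‖ ^ p := hpos x hx
      have e0 : ((‖x‖ ^ 2 : ℝ)) ^ (p/2 - 1) = ‖x‖ ^ (p - 2) := by
        rw [← Real.rpow_natCast ‖x‖ 2, ← Real.rpow_mul (norm_nonneg x)]
        congr 1
        push_cast
        ring
      have e2 : (μ - C₀ * ‖x‖ ^ p) ^ ((1:ℝ)/4 - 1) * (μ - C₀ * ‖x‖ ^ p) ^ ((1:ℝ)/4 - 1)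
          = (μ - C₀ * ‖x‖ ^ p) ^ (-(3:ℝ)/2) := by
        rw [← Real.rpow_add hs]
        norm_num
      have e3 : ‖x‖ ^ (p - 2) * ‖x‖ ^ (p - 2) * ‖x‖ ^ 2 = ‖x‖ ^ (2 * (p - 1)) := by
        rw [← Real.rpow_add hn, ← Real.rpow_natCast ‖x‖ 2, ← Real.rpow_add hn]
        congr 1
        push_cast
        ring
      calc c ^ 2 * ‖x‖ ^ 2
          = (p ^ 2 * C₀ ^ 2 / 16) *
              ((μ - C₀ * ‖x‖ ^ p) ^ ((1:ℝ)/4 - 1) * (μ - C₀ * ‖x‖ ^ p) ^ ((1:ℝ)/4 - 1)) *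
              (‖x‖ ^ (p - 2) * ‖x‖ ^ (p - 2) * ‖x‖ ^ 2) := by
            rw [hcdef, e0, key x]
            ring
        _ = (p ^ 2 * C₀ ^ 2 / 16) * (μ - C₀ * ‖x‖ ^ p) ^ (-(3:ℝ)/2) * ‖x‖ ^ (2 * (p - 1)) := by
            rw [e2, e3]
  refine ⟨part1, ?_⟩
  -- Part 2: divergence
  haveI : Nontrivial (Euc d) := by
    apply Module.nontrivial_of_finrank_pos (R := ℝ)
    rw [finrank_euclideanSpace_fin]
    omega
  set r : ℕ → ℝ := fun n => R * (1 - (2:ℝ)⁻¹ ^ (n+1)) with hrdef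
  have hrlt : ∀ n, r n < R := by
    intro n
    have h1 : (0:ℝ) < (2:ℝ)⁻¹ ^ (n+1) := by positivity
    rw [hrdef]
    nlinarith
  have hrhalf : ∀ n, R/2 ≤ r n := by
    intro n
    have h1 : ((2:ℝ)⁻¹) ^ (n+1) ≤ ((2:ℝ)⁻¹) ^ 1 :=
      pow_le_pow_of_le_one (by norm_num) (by norm_num) (by omega)
    rw [hrdef]
    simp only [pow_one] at h1
    nlinarith
  have hrpos : ∀ n, 0 < r n := fun n => lt_of_lt_of_le (half_pos hR) (hrhalf n)
  have hrmono : Monotone r := by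
    apply monotone_nat_of_le_succ
    intro n
    have h1 : ((2:ℝ)⁻¹) ^ (n+1+1) ≤ ((2:ℝ)⁻¹) ^ (n+1) :=
      pow_le_pow_of_le_one (by norm_num) (by norm_num) (by omega)
    rw [hrdef]
    nlinarith
  have hrgap : ∀ n, r (n+1) - r n = R * (2:ℝ)⁻¹ ^ (n+2) := by
    intro n
    rw [hrdef]
    ring
  set A : ℕ → Set (Euc d) := fun n => Metric.ball (0:Euc d) (r (n+1)) \ Metric.ball 0 (r n)
    with hAdef
  have hAmeas : ∀ n, MeasurableSet (A n) := fun n => measurableSet_ball.diff measurableSet_ball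
  have hAmem : ∀ n, ∀ x ∈ A n, r n ≤ ‖x‖ ∧ ‖x‖ < r (n+1) := by
    intro n x hx
    obtain ⟨h1, h2⟩ := hx
    rw [mem_ball_zero_iff] at h1
    rw [Metric.mem_ball, dist_zero_right, not_lt] at h2
    exact ⟨h2, h1⟩
  have hAdisj : Pairwise (Function.onFun Disjoint A) := by
    intro m n hmn
    wlog h : m < n generalizing m n
    · exact (this hmn.symm (by omega)).symm
    · rw [Function.onFun, Set.disjoint_left]
      intro x hxm hxn
      have h1 := (hAmem m x hxm).2
      have h2 := (hAmem n x hxn).1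
      have h3 : r (m+1) ≤ r n := hrmono h
      linarith
  have hAsub : ∀ n, A n ⊆ Metric.ball (0:Euc d) R := by
    intro n x hx
    rw [mem_ball_zero_iff]
    exact lt_trans (hAmem n x hx).2 (hrlt (n+1))
  -- upper bound on μ - C₀‖x‖^p on shell n
  have hub : ∀ n, ∀ x ∈ A n, μ - C₀ * ‖x‖ ^ p ≤ μ * p * (2:ℝ)⁻¹ ^ (n+1) := by
    intro n x hx
    set ε : ℝ := (2:ℝ)⁻¹ ^ (n+1) with hεdef
    have hε0 : 0 < ε := by positivity
    have hε1 : ε ≤ 1 := by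
      apply pow_le_one₀ <;> norm_num
    have hb : R ^ p * (1 - p * ε) ≤ ‖x‖ ^ p := by
      have hBer : 1 + p * (-ε) ≤ (1 + (-ε)) ^ p :=
        one_add_mul_self_le_rpow_one_add (by linarith) hp1
      have h1 : R ^ p * (1 - p * ε) ≤ R ^ p * (1 - ε) ^ p := by
        apply mul_le_mul_of_nonneg_left _ (Real.rpow_nonneg hR.le p)
        calc 1 - p * ε = 1 + p * (-ε) := by ring
          _ ≤ (1 + (-ε)) ^ p := hBer
          _ = (1 - ε) ^ p := by ring_nf
      have h2 : R ^ p * (1 - ε) ^ p = (r n) ^ p := by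
        rw [← Real.mul_rpow hR.le (by linarith), hrdef]
      have h3 : (r n) ^ p ≤ ‖x‖ ^ p :=
        Real.rpow_le_rpow (hrpos n).le (hAmem n x hx).1 hp0.le
      linarith
    have h4 : C₀ * (R ^ p * (1 - p * ε)) ≤ C₀ * ‖x‖ ^ p :=
      mul_le_mul_of_nonneg_left hb hC₀.le
    have h5 : C₀ * (R ^ p * (1 - p * ε)) = μ * (1 - p * ε) := by
      rw [← mul_assoc, hCRp]
    nlinarith [h4, h5]
  -- pointwise lower bound for the integrand on shell n
  set c : ℝ := p ^ 2 * C₀ ^ 2 / 16 with hcdef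
  have hcpos : 0 < c := by
    rw [hcdef]
    exact div_pos (mul_pos (pow_pos hp0 2) (pow_pos hC₀ 2)) (by norm_num)
  set K : ℕ → ℝ := fun n =>
    c * (μ * p * (2:ℝ)⁻¹ ^ (n+1)) ^ (-(3:ℝ)/2) * (R/2) ^ (2 * (p - 1)) with hKdef
  have hKpos : ∀ n, 0 < K n := by
    intro n
    have h1 : (0:ℝ) < μ * p * (2:ℝ)⁻¹ ^ (n+1) :=
      mul_pos (mul_pos hμ hp0) (by positivity)
    exact mul_pos (mul_pos hcpos (Real.rpow_pos_of_pos h1 _))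
      (Real.rpow_pos_of_pos (half_pos hR) _)
  have hlb : ∀ n, ∀ x ∈ A n,
      K n ≤ c * (μ - C₀ * ‖x‖ ^ p) ^ (-(3:ℝ)/2) * ‖x‖ ^ (2 * (p - 1)) := by
    intro n x hx
    have hxin : ‖x‖ < R := lt_trans (hAmem n x hx).2 (hrlt (n+1))
    have hFpos : 0 < μ - C₀ * ‖x‖ ^ p := hpos x hxin
    have a1 : (μ * p * (2:ℝ)⁻¹ ^ (n+1)) ^ (-(3:ℝ)/2) ≤ (μ - C₀ * ‖x‖ ^ p) ^ (-(3:ℝ)/2) :=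
      Real.rpow_le_rpow_of_nonpos hFpos (hub n x hx) (by norm_num)
    have a2 : (R/2) ^ (2 * (p - 1)) ≤ ‖x‖ ^ (2 * (p - 1)) :=
      Real.rpow_le_rpow (by linarith [half_pos hR]) ((hrhalf n).trans (hAmem n x hx).1)
        (by linarith)
    rw [hKdef]
    apply mul_le_mul (mul_le_mul_of_nonneg_left a1 hcpos.le) a2
      (Real.rpow_nonneg (by linarith [half_pos hR]) _)
      (mul_nonneg hcpos.le (Real.rpow_nonneg hFpos.le _))
  -- volume lower bound for shells
  set v := volume (Metric.ball (0:Euc d) 1) with hvdef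
  have hvne : v ≠ 0 := (Metric.measure_ball_pos volume (0:Euc d) one_pos).ne'
  have hvol : ∀ n, ENNReal.ofReal ((R/2) ^ (d-1) * (R * (2:ℝ)⁻¹ ^ (n+2))) * v ≤ volume (A n) := by
    intro n
    have hballs : Metric.ball (0:Euc d) (r n) ⊆ Metric.ball 0 (r (n+1)) :=
      Metric.ball_subset_ball (hrmono (Nat.le_succ n))
    have hdiff : volume (A n)
        = volume (Metric.ball (0:Euc d) (r (n+1))) - volume (Metric.ball (0:Euc d) (r n)) := by
      rw [hAdef]
      exact measure_diff hballs measurableSet_ball.nullMeasurableSet measure_ball_lt_top.ne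
    have hsub : ENNReal.ofReal ((r (n+1)) ^ d - (r n) ^ d) * v
        = ENNReal.ofReal ((r (n+1)) ^ d) * v - ENNReal.ofReal ((r n) ^ d) * v := by
      rw [ENNReal.ofReal_sub _ (pow_nonneg (hrpos n).le d),
        ENNReal.sub_mul (fun _ _ => measure_ball_lt_top.ne)]
    rw [hdiff, Measure.addHaar_ball volume (0:Euc d) (hrpos (n+1)).le,
      Measure.addHaar_ball volume (0:Euc d) (hrpos n).le,
      finrank_euclideanSpace_fin, ← hsub]
    apply mul_le_mul_left
    apply ENNReal.ofReal_le_ofReal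
    have hstep : (r n) ^ (d-1) * (r (n+1) - r n) ≤ (r (n+1)) ^ d - (r n) ^ d :=
      pow_sub_pow_lb hd1 hd3 (hrpos n).le (hrmono (Nat.le_succ n))
    have hfac : (R/2) ^ (d-1) * (R * (2:ℝ)⁻¹ ^ (n+2)) ≤ (r n) ^ (d-1) * (r (n+1) - r n) := by
      rw [hrgap n]
      apply mul_le_mul_of_nonneg_right
        (pow_le_pow_left₀ (by linarith [half_pos hR]) (hrhalf n) _)
        (mul_nonneg hR.le (by positivity))
    linarith
  -- the per-shell constant lower bound
  set Creal : ℝ := c * (μ * p) ^ (-(3:ℝ)/2) * (R/2) ^ (2 * (p - 1)) * ((R/2) ^ (d-1) * R) * (2:ℝ)⁻¹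
    with hCrealdef
  have hCpos : 0 < Creal := by
    rw [hCrealdef]
    have h1 : (0:ℝ) < μ * p := mul_pos hμ hp0
    have hhalf : (0:ℝ) < R/2 := half_pos hR
    exact mul_pos (mul_pos (mul_pos (mul_pos hcpos (Real.rpow_pos_of_pos h1 _))
      (Real.rpow_pos_of_pos hhalf _)) (mul_pos (pow_pos hhalf _) hR)) (by norm_num)
  have hKvol : ∀ n, Creal ≤ K n * ((R/2) ^ (d-1) * (R * (2:ℝ)⁻¹ ^ (n+2))) := by
    intro n
    set ε : ℝ := (2:ℝ)⁻¹ ^ (n+1) with hεdef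
    have hε0 : 0 < ε := by positivity
    have hε1 : ε ≤ 1 := by apply pow_le_one₀ <;> norm_num
    have hsplit : (μ * p * ε) ^ (-(3:ℝ)/2) = (μ * p) ^ (-(3:ℝ)/2) * ε ^ (-(3:ℝ)/2) :=
      Real.mul_rpow (mul_nonneg hμ.le hp0.le) hε0.le
    have hεb : ε⁻¹ ≤ ε ^ (-(3:ℝ)/2) := by
      have := Real.rpow_le_rpow_of_exponent_ge hε0 hε1 (by norm_num : -(3:ℝ)/2 ≤ -1)
      rwa [Real.rpow_neg_one] at this
    have hεc : ε⁻¹ * (2:ℝ)⁻¹ ^ (n+2) = 2⁻¹ := by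
      have hps : (2:ℝ)⁻¹ ^ (n+2) = (2:ℝ)⁻¹ ^ (n+1) * 2⁻¹ := pow_succ _ _
      rw [hεdef, hps, ← mul_assoc, inv_mul_cancel₀ (by positivity), one_mul]
    have hchain : Creal ≤ (c * (μ * p) ^ (-(3:ℝ)/2) * (R/2) ^ (2 * (p - 1)) *
        ((R/2) ^ (d-1) * R)) * (ε ^ (-(3:ℝ)/2) * (2:ℝ)⁻¹ ^ (n+2)) := by
      have hB : (0:ℝ) ≤ c * (μ * p) ^ (-(3:ℝ)/2) * (R/2) ^ (2 * (p - 1)) *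
          ((R/2) ^ (d-1) * R) := by
        have h1 : (0:ℝ) < μ * p := mul_pos hμ hp0
        have hhalf : (0:ℝ) < R/2 := half_pos hR
        exact le_of_lt (mul_pos (mul_pos (mul_pos hcpos (Real.rpow_pos_of_pos h1 _))
          (Real.rpow_pos_of_pos hhalf _)) (mul_pos (pow_pos hhalf _) hR))
      have h2 : (2:ℝ)⁻¹ ≤ ε ^ (-(3:ℝ)/2) * (2:ℝ)⁻¹ ^ (n+2) := by
        calc (2:ℝ)⁻¹ = ε⁻¹ * (2:ℝ)⁻¹ ^ (n+2) := hεc.symm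
          _ ≤ ε ^ (-(3:ℝ)/2) * (2:ℝ)⁻¹ ^ (n+2) :=
            mul_le_mul_of_nonneg_right hεb (by positivity)
      calc Creal = (c * (μ * p) ^ (-(3:ℝ)/2) * (R/2) ^ (2 * (p - 1)) *
          ((R/2) ^ (d-1) * R)) * (2:ℝ)⁻¹ := by rw [hCrealdef]
        _ ≤ _ := mul_le_mul_of_nonneg_left h2 hB
    calc Creal ≤ _ := hchain
      _ = K n * ((R/2) ^ (d-1) * (R * (2:ℝ)⁻¹ ^ (n+2))) := by
          rw [hKdef]
          simp only []
          rw [hsplit]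
          ring
  -- per-shell integral lower bound
  have hterm : ∀ n, ENNReal.ofReal Creal * v ≤
      ∫⁻ x in A n, ENNReal.ofReal
        (c * (μ - C₀ * ‖x‖ ^ p) ^ (-(3:ℝ)/2) * ‖x‖ ^ (2 * (p - 1))) := by
    intro n
    calc ENNReal.ofReal Creal * v
        ≤ ENNReal.ofReal (K n * ((R/2) ^ (d-1) * (R * (2:ℝ)⁻¹ ^ (n+2)))) * v :=
          mul_le_mul_left (ENNReal.ofReal_le_ofReal (hKvol n)) v
      _ = ENNReal.ofReal (K n) * (ENNReal.ofReal ((R/2) ^ (d-1) * (R * (2:ℝ)⁻¹ ^ (n+2))) * v) := by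
          rw [ENNReal.ofReal_mul (hKpos n).le]
          ring
      _ ≤ ENNReal.ofReal (K n) * volume (A n) := mul_le_mul_right (hvol n) _
      _ = ∫⁻ _ in A n, ENNReal.ofReal (K n) := (setLIntegral_const _ _).symm
      _ ≤ _ := by
          apply lintegral_mono_ae
          filter_upwards [ae_restrict_mem (hAmeas n)] with x hx
          exact ENNReal.ofReal_le_ofReal (hlb n x hx)
  rw [eq_top_iff]
  calc (⊤:ENNReal) = ∑' (_ : ℕ), ENNReal.ofReal Creal * v := by
        rw [ENNReal.tsum_const_eq_top_of_ne_zero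
          (mul_ne_zero (ENNReal.ofReal_pos.2 hCpos).ne' hvne)]
    _ ≤ ∑' n, ∫⁻ x in A n, ENNReal.ofReal
          (c * (μ - C₀ * ‖x‖ ^ p) ^ (-(3:ℝ)/2) * ‖x‖ ^ (2 * (p - 1))) :=
        ENNReal.tsum_le_tsum hterm
    _ = ∫⁻ x in ⋃ n, A n, ENNReal.ofReal
          (c * (μ - C₀ * ‖x‖ ^ p) ^ (-(3:ℝ)/2) * ‖x‖ ^ (2 * (p - 1))) :=
        (lintegral_iUnion hAmeas hAdisj _).symm
    _ ≤ _ := lintegral_mono_set (Set.iUnion_subset hAsub)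


end
end

section
/- Let K ⊂ ℝ^d be a nonempty open set and suppose u ∈ C²(K) is bounded on K and satisfies −Δu = f on K with f bounded on K. Then there exists a constant C depending only on d such that for every x ∈ K, |∇u(x)|² ≤ C·(‖f‖_{L^∞(K)}·‖u‖_{L^∞(K)} + dist(x, ∂K)^{−2}·‖u‖²_{L^∞(K)}). -/
open MeasureTheory Filter

noncomputable section

namespace GradEst

variable {d : ℕ}

def eb (d : ℕ) (i : Fin d) : Euc d := EuclideanSpace.single i (1:ℝ)

lemma proj_eb (i j : Fin d) : (EuclideanSpace.proj (𝕜 := ℝ) j) (eb d i) = if j = i then 1 else 0 := by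
  simp [eb, EuclideanSpace.single_apply]

lemma hasFDerivAt_coordwise {P : Fin d → ℝ → ℝ} (hP : ∀ j, Differentiable ℝ (P j)) (y : Euc d) :
    HasFDerivAt (fun z : Euc d => ∑ j, P j (z j))
      (∑ j, (deriv (P j) (y j)) • (EuclideanSpace.proj (𝕜 := ℝ) j)) y := by
  apply HasFDerivAt.fun_sum
  intro j _
  have hp : HasFDerivAt (fun z : Euc d => z j) (EuclideanSpace.proj (𝕜 := ℝ) j) y :=
    (EuclideanSpace.proj (𝕜 := ℝ) j).hasFDerivAt
  exact ((hP j (y j)).hasDerivAt).comp_hasFDerivAt y hp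

lemma fderiv_coordwise_apply {P : Fin d → ℝ → ℝ} (hP : ∀ j, Differentiable ℝ (P j)) (y : Euc d)
    (k : Fin d) :
    fderiv ℝ (fun z : Euc d => ∑ j, P j (z j)) y (eb d k) = deriv (P k) (y k) := by
  rw [(hasFDerivAt_coordwise hP y).fderiv]
  rw [ContinuousLinearMap.sum_apply]
  simp only [ContinuousLinearMap.smul_apply, proj_eb]
  rw [Finset.sum_eq_single k]
  · simp
  · intro b _ hb; simp [hb]
  · simp

lemma lap_coordwise {P : Fin d → ℝ → ℝ} (hP : ∀ j, Differentiable ℝ (P j))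
    (hP' : ∀ j, Differentiable ℝ (deriv (P j))) (x : Euc d) :
    lap d (fun z => ∑ j, P j (z j)) x = ∑ j, deriv (deriv (P j)) (x j) := by
  unfold lap
  apply Finset.sum_congr rfl
  intro k _
  have he : (fun y : Euc d => fderiv ℝ (fun z : Euc d => ∑ j, P j (z j)) y (EuclideanSpace.single k 1))
      = fun y : Euc d => deriv (P k) (y k) := funext fun y => fderiv_coordwise_apply hP y k
  rw [he]
  have hp : HasFDerivAt (fun z : Euc d => z k) (EuclideanSpace.proj (𝕜 := ℝ) k) x :=
    (EuclideanSpace.proj (𝕜 := ℝ) k).hasFDerivAt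
  have h : HasFDerivAt (fun y : Euc d => deriv (P k) (y k))
      (deriv (deriv (P k)) (x k) • (EuclideanSpace.proj (𝕜 := ℝ) k)) x :=
    by have := ((hP' k (x k)).hasDerivAt).comp_hasFDerivAt x hp; exact this
  rw [h.fderiv]
  simp only [ContinuousLinearMap.smul_apply]
  rw [show (EuclideanSpace.single k (1:ℝ)) = eb d k from rfl, proj_eb]
  simp

lemma contDiff_coordwise {P : Fin d → ℝ → ℝ} {n : ℕ∞} (hP : ∀ j, ContDiff ℝ n (P j)) :
    ContDiff ℝ n (fun z : Euc d => ∑ j, P j (z j)) := by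
  apply ContDiff.sum
  intro j _
  exact (hP j).comp (EuclideanSpace.proj (𝕜 := ℝ) j).contDiff

lemma hasDerivAt_quad (a b c t : ℝ) :
    HasDerivAt (fun t => a*(t-b)^2 + c*(t-b)) (2*a*(t-b) + c) t := by
  have h1 : HasDerivAt (fun t : ℝ => t - b) 1 t := (hasDerivAt_id t).sub_const b
  have h2 := (h1.pow 2).const_mul a
  have h3 := h1.const_mul c
  refine (h2.fun_add h3).congr_deriv ?_
  ring

lemma quad_differentiable (a b c : ℝ) : Differentiable ℝ (fun t => a*(t-b)^2 + c*(t-b)) :=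
  fun t => (hasDerivAt_quad a b c t).differentiableAt

lemma deriv_quad (a b c : ℝ) : deriv (fun t => a*(t-b)^2 + c*(t-b)) = fun t => 2*a*(t-b) + c :=
  funext fun t => (hasDerivAt_quad a b c t).deriv

lemma hasDerivAt_lin (m b c t : ℝ) : HasDerivAt (fun t => m*(t-b) + c) m t := by
  have h1 : HasDerivAt (fun t : ℝ => t - b) 1 t := (hasDerivAt_id t).sub_const b
  have := (h1.const_mul m).add_const c
  refine this.congr_deriv ?_
  ring

lemma lin_differentiable (m b c : ℝ) : Differentiable ℝ (fun t => m*(t-b) + c) :=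
  fun t => (hasDerivAt_lin m b c t).differentiableAt

lemma deriv_lin (m b c : ℝ) : deriv (fun t => m*(t-b) + c) = fun _ => m :=
  funext fun t => (hasDerivAt_lin m b c t).deriv

lemma contDiff_quad (a b c : ℝ) {n : ℕ∞} : ContDiff ℝ n (fun t => a*(t-b)^2 + c*(t-b)) :=
  ((contDiff_const.mul (((contDiff_id).sub contDiff_const).pow 2)).add
    (contDiff_const.mul ((contDiff_id).sub contDiff_const)))


open Filter Topology Set

lemma deriv2_nonpos_of_isLocalMax {h : ℝ → ℝ}
    (hdiff : ∀ᶠ t in 𝓝 (0:ℝ), DifferentiableAt ℝ h t)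
    (hd2 : DifferentiableAt ℝ (deriv h) 0)
    (hmax : IsLocalMax h 0) : deriv (deriv h) 0 ≤ 0 := by
  by_contra hc
  push_neg at hc
  have h0 : deriv h 0 = 0 := hmax.deriv_eq_zero
  have hslope := hasDerivAt_iff_tendsto_slope.mp hd2.hasDerivAt
  have hev : ∀ᶠ t in 𝓝[≠] (0:ℝ), 0 < slope (deriv h) 0 t :=
    hslope.eventually (eventually_gt_nhds hc)
  have hev' : ∀ᶠ t in 𝓝[>] (0:ℝ), 0 < deriv h t := by
    have h1 : ∀ᶠ t in 𝓝[>] (0:ℝ), 0 < slope (deriv h) 0 t :=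
      nhdsWithin_mono 0 (fun t (ht : t ∈ Ioi 0) => ne_of_gt ht) hev
    filter_upwards [h1, self_mem_nhdsWithin] with t ht ht'
    have heq : slope (deriv h) 0 t = deriv h t / t := by
      simp [slope, h0, div_eq_inv_mul]
    rw [heq] at ht
    have htpos : (0:ℝ) < t := ht'
    have := mul_pos ht htpos
    rwa [div_mul_cancel₀ _ (ne_of_gt htpos)] at this
  obtain ⟨u, hu, hIoo⟩ := mem_nhdsGT_iff_exists_Ioo_subset.mp hev'
  obtain ⟨ε, hε, hball⟩ := Metric.eventually_nhds_iff.mp (hdiff.and hmax)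
  set δ := min (u/2) (ε/2) with hδdef
  have hδpos : 0 < δ := lt_min (by linarith [mem_Ioi.mp hu]) (by linarith)
  have hmono : StrictMonoOn h (Icc 0 δ) := by
    apply strictMonoOn_of_deriv_pos (convex_Icc 0 δ)
    · intro t ht
      have : |t| < ε := by
        rw [abs_of_nonneg ht.1]
        calc t ≤ δ := ht.2
        _ ≤ ε/2 := min_le_right _ _
        _ < ε := by linarith
      exact ((hball (by simpa [Real.dist_eq] using this)).1).continuousAt.continuousWithinAt
    · intro t ht
      rw [interior_Icc] at ht
      apply hIoo
      exact ⟨ht.1, lt_of_lt_of_le ht.2 (le_trans (min_le_left _ _) (by linarith [mem_Ioi.mp hu]))⟩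
  have hlt : h 0 < h δ := hmono (left_mem_Icc.mpr hδpos.le) (right_mem_Icc.mpr hδpos.le) hδpos
  have hle : h δ ≤ h 0 := by
    have : |δ| < ε := by
      rw [abs_of_nonneg hδpos.le]
      calc δ ≤ ε/2 := min_le_right _ _
      _ < ε := by linarith
    exact (hball (by simpa [Real.dist_eq] using this)).2
  linarith

lemma lap_nonpos_of_isLocalMax {w : Euc d → ℝ} {x : Euc d}
    (hw : ContDiffAt ℝ 2 w x) (hmax : IsLocalMax w x) : lap d w x ≤ 0 := by
  unfold lap
  apply Finset.sum_nonpos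
  intro j _
  set v : Euc d := EuclideanSpace.single j (1:ℝ) with hv
  set L : ℝ → Euc d := fun t => x + t • v with hLdef
  have hL : ∀ t, HasDerivAt L v t := by
    intro t
    have h1 : HasDerivAt (fun t : ℝ => t • v) ((1:ℝ) • v) t := (hasDerivAt_id t).smul_const v
    have h2 := h1.const_add x; rw [one_smul] at h2; exact h2
  have hLcont : Continuous L := by
    have := (continuous_id.smul continuous_const : Continuous fun t : ℝ => t • v)
    exact continuous_const.add this
  have hL0 : L 0 = x := by simp [hLdef]
  have hwev : ∀ᶠ y in 𝓝 x, ContDiffAt ℝ 2 w y := hw.eventually (by norm_num)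
  have htend : Tendsto L (𝓝 0) (𝓝 x) := by
    have := hLcont.tendsto 0
    rwa [hL0] at this
  have hevL : ∀ᶠ t in 𝓝 (0:ℝ), ContDiffAt ℝ 2 w (L t) := htend.eventually hwev
  set h : ℝ → ℝ := fun t => w (L t) with hhdef
  set g : Euc d → ℝ := fun y => fderiv ℝ w y v with hgdef
  have hder : ∀ᶠ t in 𝓝 (0:ℝ), HasDerivAt h (g (L t)) t := by
    filter_upwards [hevL] with t ht
    exact ((ht.differentiableAt (by norm_num)).hasFDerivAt).comp_hasDerivAt t (hL t)
  have hdiff : ∀ᶠ t in 𝓝 (0:ℝ), DifferentiableAt ℝ h t := by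
    filter_upwards [hder] with t ht using ht.differentiableAt
  have hEq : deriv h =ᶠ[𝓝 (0:ℝ)] fun t => g (L t) := by
    filter_upwards [hder] with t ht using ht.deriv
  have hgdiff : DifferentiableAt ℝ g x := by
    have h1 : ContDiffAt ℝ 1 (fderiv ℝ w) x := hw.fderiv_right le_rfl
    exact (h1.differentiableAt one_ne_zero).clm_apply (differentiableAt_const v)
  have hgL : HasDerivAt (fun t => g (L t)) (fderiv ℝ g x v) 0 := by
    have h2 : HasFDerivAt g (fderiv ℝ g x) (L 0) := by
      rw [hL0]; exact hgdiff.hasFDerivAt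
    exact h2.comp_hasDerivAt 0 (hL 0)
  have hd2 : DifferentiableAt ℝ (deriv h) 0 :=
    (Filter.EventuallyEq.differentiableAt_iff hEq).mpr hgL.differentiableAt
  have hmax' : IsLocalMax h 0 := by
    have : ∀ᶠ t in 𝓝 (0:ℝ), w (L t) ≤ w x := htend.eventually hmax
    filter_upwards [this] with t ht
    simpa [hhdef, hL0] using ht
  have hkey := deriv2_nonpos_of_isLocalMax hdiff hd2 hmax'
  have : deriv (deriv h) 0 = fderiv ℝ g x v := by
    rw [hEq.deriv_eq, hgL.deriv]
  rw [this] at hkey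
  exact hkey


lemma pd_diffAt {u : Euc d → ℝ} {x : Euc d} (hu : ContDiffAt ℝ 2 u x) (e : Euc d) :
    DifferentiableAt ℝ (fun y => fderiv ℝ u y e) x := by
  have h1 : ContDiffAt ℝ 1 (fderiv ℝ u) x := hu.fderiv_right le_rfl
  exact (h1.differentiableAt one_ne_zero).clm_apply (differentiableAt_const e)

lemma lap_congr {u v : Euc d → ℝ} {x : Euc d} (h : u =ᶠ[𝓝 x] v) : lap d u x = lap d v x := by
  unfold lap
  apply Finset.sum_congr rfl
  intro j _
  have h1 : (fun y => fderiv ℝ u y (EuclideanSpace.single j 1)) =ᶠ[𝓝 x]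
      (fun y => fderiv ℝ v y (EuclideanSpace.single j 1)) := by
    filter_upwards [h.eventuallyEq_nhds] with y hy
    rw [hy.fderiv_eq]
  rw [h1.fderiv_eq]

lemma lap_add {u v : Euc d → ℝ} {x : Euc d} (hu : ContDiffAt ℝ 2 u x) (hv : ContDiffAt ℝ 2 v x) :
    lap d (fun y => u y + v y) x = lap d u x + lap d v x := by
  unfold lap
  rw [← Finset.sum_add_distrib]
  apply Finset.sum_congr rfl
  intro j _
  set e := EuclideanSpace.single j (1:ℝ) with he
  have h1 : (fun y => fderiv ℝ (fun z => u z + v z) y e) =ᶠ[𝓝 x]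
      (fun y => fderiv ℝ u y e + fderiv ℝ v y e) := by
    filter_upwards [hu.eventually (by norm_num), hv.eventually (by norm_num)] with y hyu hyv
    rw [fderiv_fun_add (hyu.differentiableAt (by norm_num)) (hyv.differentiableAt (by norm_num))]
    rfl
  rw [h1.fderiv_eq, fderiv_fun_add (pd_diffAt hu e) (pd_diffAt hv e)]
  rfl

lemma lap_const_mul {u : Euc d → ℝ} {x : Euc d} (c : ℝ) (hu : ContDiffAt ℝ 2 u x) :
    lap d (fun y => c * u y) x = c * lap d u x := by
  unfold lap
  rw [Finset.mul_sum]
  apply Finset.sum_congr rfl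
  intro j _
  set e := EuclideanSpace.single j (1:ℝ) with he
  have h1 : (fun y => fderiv ℝ (fun z => c * u z) y e) =ᶠ[𝓝 x]
      (fun y => c * fderiv ℝ u y e) := by
    filter_upwards [hu.eventually (by norm_num)] with y hyu
    rw [fderiv_const_mul (hyu.differentiableAt (by norm_num)) c]
    rfl
  rw [h1.fderiv_eq, fderiv_const_mul (pd_diffAt hu e) c]
  rfl

/-! ### Reflection -/

def reflCLM (d : ℕ) (i : Fin d) : Euc d →L[ℝ] Euc d :=
  ContinuousLinearMap.id ℝ (Euc d) - (2:ℝ) • ((EuclideanSpace.proj (𝕜 := ℝ) i).smulRight (eb d i))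

def refl (d : ℕ) (i : Fin d) (c : ℝ) : Euc d → Euc d := fun y => reflCLM d i y + c • eb d i

lemma refl_apply (i : Fin d) (c : ℝ) (y : Euc d) (j : Fin d) :
    refl d i c y j = if j = i then c - y i else y j := by
  simp only [refl, reflCLM, ContinuousLinearMap.sub_apply, ContinuousLinearMap.id_apply,
    ContinuousLinearMap.smul_apply, ContinuousLinearMap.smulRight_apply]
  by_cases hj : j = i
  · subst hj
    simp [eb, EuclideanSpace.single_apply]
    ring
  · simp [eb, EuclideanSpace.single_apply, hj]

lemma reflCLM_eb (i j : Fin d) : reflCLM d i (eb d j) = (if j = i then (-1:ℝ) else 1) • eb d j := by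
  simp only [reflCLM, ContinuousLinearMap.sub_apply, ContinuousLinearMap.id_apply,
    ContinuousLinearMap.smul_apply, ContinuousLinearMap.smulRight_apply]
  by_cases hj : j = i
  · subst hj
    rw [proj_eb]
    simp
    module
  · rw [if_neg hj, proj_eb, if_neg (fun h => hj h.symm)]
    simp

lemma hasFDerivAt_refl (i : Fin d) (c : ℝ) (y : Euc d) :
    HasFDerivAt (refl d i c) (reflCLM d i) y :=
  ((reflCLM d i).hasFDerivAt).add_const (c • eb d i)

lemma continuous_refl (i : Fin d) (c : ℝ) : Continuous (refl d i c) :=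
  ((reflCLM d i).continuous).add continuous_const

lemma fderiv_comp_refl_apply {u : Euc d → ℝ} {i : Fin d} {c : ℝ} {y : Euc d}
    (hu : DifferentiableAt ℝ u (refl d i c y)) (j : Fin d) :
    fderiv ℝ (fun z => u (refl d i c z)) y (eb d j)
      = (if j = i then (-1:ℝ) else 1) * fderiv ℝ u (refl d i c y) (eb d j) := by
  have h : HasFDerivAt (fun z => u (refl d i c z))
      ((fderiv ℝ u (refl d i c y)).comp (reflCLM d i)) y :=
    hu.hasFDerivAt.comp y (hasFDerivAt_refl i c y)
  rw [h.fderiv]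
  rw [ContinuousLinearMap.comp_apply, reflCLM_eb, ContinuousLinearMap.map_smul, smul_eq_mul]

lemma lap_comp_refl {u : Euc d → ℝ} {i : Fin d} {c : ℝ} {y : Euc d}
    (hu : ContDiffAt ℝ 2 u (refl d i c y)) :
    lap d (fun z => u (refl d i c z)) y = lap d u (refl d i c y) := by
  unfold lap
  apply Finset.sum_congr rfl
  intro j _
  set e : Euc d := EuclideanSpace.single j (1:ℝ) with he
  have hee : e = eb d j := rfl
  set ε : ℝ := if j = i then (-1:ℝ) else 1 with hε
  have hε2 : ε * ε = 1 := by by_cases hj : j = i <;> simp [hε, hj]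
  set g : Euc d → ℝ := fun w => fderiv ℝ u w e with hg
  have htend : Tendsto (refl d i c) (𝓝 y) (𝓝 (refl d i c y)) := (continuous_refl i c).tendsto y
  have hev : ∀ᶠ z in 𝓝 y, ContDiffAt ℝ 2 u (refl d i c z) :=
    htend.eventually (hu.eventually (by norm_num))
  have h1 : (fun z => fderiv ℝ (fun w => u (refl d i c w)) z e) =ᶠ[𝓝 y]
      (fun z => ε * g (refl d i c z)) := by
    filter_upwards [hev] with z hz
    rw [hee, fderiv_comp_refl_apply (hz.differentiableAt (by norm_num)) j, ← hε, ← hee]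
  rw [h1.fderiv_eq]
  have hgdiff : DifferentiableAt ℝ g (refl d i c y) := pd_diffAt hu e
  have hcomp : HasFDerivAt (fun z => g (refl d i c z))
      ((fderiv ℝ g (refl d i c y)).comp (reflCLM d i)) y :=
    hgdiff.hasFDerivAt.comp y (hasFDerivAt_refl i c y)
  have h2 : fderiv ℝ (fun z => ε * g (refl d i c z)) y e
      = ε * ((fderiv ℝ g (refl d i c y)).comp (reflCLM d i) e) := by
    rw [fderiv_const_mul hcomp.differentiableAt ε, hcomp.fderiv]
    rfl
  rw [h2, ContinuousLinearMap.comp_apply, hee, reflCLM_eb, _root_.map_smul]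
  rw [← hε, smul_eq_mul, ← mul_assoc, hε2, one_mul, ← hee]


/-! ### Maximum principle -/

def qP (d : ℕ) : Fin d → ℝ → ℝ := fun _ t => 1*(t-0)^2 + 0*(t-0)

def qfun (d : ℕ) : Euc d → ℝ := fun z => ∑ j, qP d j (z j)

lemma qfun_contDiff : ContDiff ℝ 2 (qfun d) :=
  contDiff_coordwise (fun _ => contDiff_quad 1 0 0)

lemma qfun_eq_normsq (z : Euc d) : qfun d z = ‖z‖^2 := by
  have h1 : qfun d z = ∑ j, (z j)^2 := by
    apply Finset.sum_congr rfl
    intro j _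
    simp [qP]
  rw [h1, EuclideanSpace.norm_eq]
  rw [Real.sq_sqrt (by positivity)]
  apply Finset.sum_congr rfl
  intro j _
  rw [Real.norm_eq_abs, sq_abs]

lemma qfun_nonneg (z : Euc d) : 0 ≤ qfun d z := by
  rw [qfun_eq_normsq]; positivity

lemma lap_qfun (z : Euc d) : lap d (qfun d) z = 2*(d:ℝ) := by
  have h := lap_coordwise (P := qP d) (fun _ => quad_differentiable 1 0 0)
    (fun j => by rw [show qP d j = fun t => 1*(t-0)^2 + 0*(t-0) from rfl, deriv_quad]
                 exact lin_differentiable (2*1) 0 0) z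
  rw [show (fun z : Euc d => ∑ j, qP d j (z j)) = qfun d from rfl] at h
  rw [h]
  have : ∀ j : Fin d, deriv (deriv (qP d j)) (z j) = 2 := by
    intro j
    rw [show qP d j = fun t => 1*(t-0)^2 + 0*(t-0) from rfl, deriv_quad, deriv_lin]
    norm_num
  rw [Finset.sum_congr rfl (fun j _ => this j)]
  simp [mul_comm]

lemma max_principle (hd1 : 1 ≤ d) {U : Set (Euc d)} (hUo : IsOpen U)
    (hUb : Bornology.IsBounded U) {w : Euc d → ℝ}
    (hc : ContinuousOn w (closure U)) (hw : ∀ y ∈ U, ContDiffAt ℝ 2 w y)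
    (hl : ∀ y ∈ U, 0 ≤ lap d w y) (hfr : ∀ y ∈ frontier U, w y ≤ 0) :
    ∀ y ∈ U, w y ≤ 0 := by
  intro y0 hy0
  obtain ⟨ρ, hρ⟩ := hUb.closure.subset_closedBall 0
  have hcomp : IsCompact (closure U) := hUb.isCompact_closure
  have key : ∀ ε : ℝ, 0 < ε → w y0 ≤ ε * ρ^2 := by
    intro ε hε
    set wε : Euc d → ℝ := fun z => w z + ε * qfun d z with hwε
    have hwεc : ContinuousOn wε (closure U) :=
      hc.add ((continuous_const.mul qfun_contDiff.continuous).continuousOn)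
    obtain ⟨z, hzT, hzmax⟩ := hcomp.exists_isMaxOn ⟨y0, subset_closure hy0⟩ hwεc
    by_cases hzU : z ∈ U
    · exfalso
      have hloc : IsLocalMax wε z := by
        filter_upwards [hUo.mem_nhds hzU] with t ht using hzmax (subset_closure ht)
      have hqCD : ContDiffAt ℝ 2 (fun z : Euc d => ε * qfun d z) z :=
        (contDiff_const.mul qfun_contDiff).contDiffAt
      have h2 : ContDiffAt ℝ 2 wε z := (hw z hzU).add hqCD
      have hnp := lap_nonpos_of_isLocalMax h2 hloc
      have hlapeq : lap d wε z = lap d w z + ε * (2*(d:ℝ)) := by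
        rw [hwε, lap_add (hw z hzU) hqCD, lap_const_mul ε qfun_contDiff.contDiffAt, lap_qfun]
      have h0 := hl z hzU
      have hd : (1:ℝ) ≤ (d:ℝ) := by exact_mod_cast hd1
      nlinarith
    · have hzfr : z ∈ frontier U := by
        rw [frontier, hUo.interior_eq]; exact ⟨hzT, hzU⟩
      have h1 : wε y0 ≤ wε z := hzmax (subset_closure hy0)
      have h2 : w z ≤ 0 := hfr z hzfr
      have h3 : qfun d z ≤ ρ^2 := by
        rw [qfun_eq_normsq]
        have := mem_closedBall_zero_iff.mp (hρ hzT)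
        exact pow_le_pow_left₀ (norm_nonneg z) this 2
      have h4 := qfun_nonneg (d := d) y0
      simp only [hwε] at h1
      nlinarith
  by_contra hpos
  push_neg at hpos
  rcases eq_or_lt_of_le (sq_nonneg ρ) with h | h
  · have := key 1 one_pos
    nlinarith
  · have h5 := key (w y0 / (2*ρ^2)) (by positivity)
    have h6 : w y0 / (2*ρ^2) * ρ^2 = w y0 / 2 := by
      rw [div_mul_eq_mul_div, mul_div_mul_right _ _ h.ne']
    rw [h6] at h5
    linarith


/-! ### The key per-coordinate gradient bound -/

set_option maxHeartbeats 1000000 in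
lemma coord_deriv_bound (hd1 : 1 ≤ d) {K : Set (Euc d)} (hK : IsOpen K)
    {u f : Euc d → ℝ} (hu : ContDiffOn ℝ 2 u K)
    (heq : ∀ y ∈ K, -lap d u y = f y)
    {Mu Mf : ℝ} (hMu : ∀ y ∈ K, |u y| ≤ Mu) (hMf : ∀ y ∈ K, |f y| ≤ Mf)
    {x : Euc d} (hx : x ∈ K) {R : ℝ} (hR : 0 < R)
    (hcube : {y : Euc d | ∀ j, |y j - x j| ≤ R} ⊆ K) (i : Fin d) :
    fderiv ℝ u x (eb d i) ≤ (d:ℝ)*Mu/R + Mf*R/2 := by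
  have hMu0 : 0 ≤ Mu := le_trans (abs_nonneg _) (hMu x hx)
  have hMf0 : 0 ≤ Mf := le_trans (abs_nonneg _) (hMf x hx)
  have hucd : ∀ y ∈ K, ContDiffAt ℝ 2 u y := fun y hy => hu.contDiffAt (hK.mem_nhds hy)
  have hcont_j : ∀ j : Fin d, Continuous (fun y : Euc d => y j - x j) := fun j =>
    ((EuclideanSpace.proj (𝕜 := ℝ) j).continuous).sub continuous_const
  set Copen : Set (Euc d) := {y | ∀ j, |y j - x j| < R} with hCopen
  set U : Set (Euc d) := {y | 0 < y i - x i ∧ ∀ j, |y j - x j| < R} with hU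
  set Ucl : Set (Euc d) := {y | 0 ≤ y i - x i ∧ ∀ j, |y j - x j| ≤ R} with hUcldef
  have hCopenK : Copen ⊆ K := fun y hy => hcube (fun j => (hy j).le)
  have hUCopen : U ⊆ Copen := fun y hy => hy.2
  have hUclK : Ucl ⊆ K := fun y hy => hcube hy.2
  have hUopen : IsOpen U := by
    have h1 : IsOpen {y : Euc d | 0 < y i - x i} := isOpen_lt continuous_const (hcont_j i)
    have h2 : IsOpen (⋂ j, {y : Euc d | |y j - x j| < R}) :=
      isOpen_iInter_of_finite (fun j => isOpen_lt ((hcont_j j).abs) continuous_const)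
    have : U = {y : Euc d | 0 < y i - x i} ∩ ⋂ j, {y : Euc d | |y j - x j| < R} := by
      ext y; simp [hU, Set.mem_iInter]
    rw [this]; exact h1.inter h2
  have hUb : Bornology.IsBounded U := by
    apply (Metric.isBounded_closedBall (x := x) (r := R * Real.sqrt d)).subset
    intro y hy
    rw [Metric.mem_closedBall, EuclideanSpace.dist_eq]
    have h1 : ∑ j, dist (y j) (x j) ^ 2 ≤ (d:ℝ) * R^2 := by
      calc ∑ j, dist (y j) (x j) ^ 2 ≤ ∑ _j : Fin d, R^2 := by
            apply Finset.sum_le_sum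
            intro j _
            rw [Real.dist_eq]
            nlinarith [hy.2 j, abs_nonneg (y j - x j)]
      _ = (d:ℝ) * R^2 := by simp [mul_comm]
    calc Real.sqrt (∑ j, dist (y j) (x j) ^ 2) ≤ Real.sqrt ((d:ℝ) * R^2) := Real.sqrt_le_sqrt h1
    _ = R * Real.sqrt d := by
        rw [mul_comm, Real.sqrt_mul (by positivity), Real.sqrt_sq hR.le]
  have hUclosed : closure U ⊆ Ucl := by
    apply closure_minimal
    · intro y hy; exact ⟨hy.1.le, fun j => (hy.2 j).le⟩
    · have h1 : IsClosed {y : Euc d | 0 ≤ y i - x i} := isClosed_le continuous_const (hcont_j i)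
      have h2 : IsClosed (⋂ j, {y : Euc d | |y j - x j| ≤ R}) :=
        isClosed_iInter (fun j => isClosed_le ((hcont_j j).abs) continuous_const)
      have : Ucl = {y : Euc d | 0 ≤ y i - x i} ∩ ⋂ j, {y : Euc d | |y j - x j| ≤ R} := by
        ext y; simp [hUcldef, Set.mem_iInter]
      rw [this]; exact h1.inter h2
  -- reflection
  set c : ℝ := 2 * x i with hc
  have hσx : refl d i c x = x := by
    ext j
    rw [refl_apply]
    by_cases hj : j = i
    · subst hj; rw [if_pos rfl]; ring
    · rw [if_neg hj]
  have hσcoord : ∀ (y : Euc d) (j : Fin d), |refl d i c y j - x j| = |y j - x j| := by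
    intro y j
    rw [refl_apply]
    by_cases hj : j = i
    · subst hj; rw [if_pos rfl, hc, show 2 * x j - y j - x j = -(y j - x j) by ring, abs_neg]
    · rw [if_neg hj]
  have hσUcl : ∀ y ∈ Ucl, refl d i c y ∈ K := by
    intro y hy
    apply hcube
    intro j
    rw [hσcoord]
    exact hy.2 j
  have hσCopen : ∀ y ∈ Copen, refl d i c y ∈ Copen := by
    intro y hy j
    rw [hσcoord]
    exact hy j
  have hσCD : ContDiff ℝ 2 (refl d i c) := ((reflCLM d i).contDiff).add contDiff_const
  -- barrier
  set A0 : ℝ := Mu/R^2 with hA0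
  set B0 : ℝ := (d:ℝ)*Mu/R + Mf*R/2 with hB0
  set C0 : ℝ := -(((d:ℝ)-1)*Mu/R^2 + Mf/2) with hC0
  set ψP : Fin d → ℝ → ℝ :=
    fun j t => (if j = i then C0 else A0) * (t - x j)^2 + (if j = i then B0 else 0) * (t - x j)
    with hψP
  set ψ : Euc d → ℝ := fun y => ∑ j, ψP j (y j) with hψ
  have hψPq : ∀ j, ψP j = fun t => (if j = i then C0 else A0) * (t - x j)^2
      + (if j = i then B0 else 0) * (t - x j) := fun j => rfl
  have hψPdiff : ∀ j, Differentiable ℝ (ψP j) := fun j => quad_differentiable _ _ _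
  have hψPderiv : ∀ j, deriv (ψP j)
      = fun t => 2*(if j = i then C0 else A0)*(t - x j) + (if j = i then B0 else 0) :=
    fun j => deriv_quad _ _ _
  have hψPderiv2 : ∀ j, Differentiable ℝ (deriv (ψP j)) := by
    intro j
    rw [hψPderiv j]
    exact lin_differentiable _ _ _
  have hψCD : ContDiff ℝ 2 ψ := contDiff_coordwise (fun j => contDiff_quad _ _ _)
  have hψval : ∀ y : Euc d, ψ y = A0 * (∑ j ∈ Finset.univ.erase i, (y j - x j)^2)
      + C0 * (y i - x i)^2 + B0 * (y i - x i) := by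
    intro y
    show (∑ j, ψP j (y j)) = _
    rw [← Finset.sum_erase_add _ _ (Finset.mem_univ i)]
    have h1 : ∑ j ∈ Finset.univ.erase i, ψP j (y j)
        = A0 * (∑ j ∈ Finset.univ.erase i, (y j - x j)^2) := by
      rw [Finset.mul_sum]
      apply Finset.sum_congr rfl
      intro j hj
      have hjne : j ≠ i := Finset.ne_of_mem_erase hj
      simp only [hψP, if_neg hjne]
      ring
    rw [h1]
    have h2 : ψP i (y i) = C0 * (y i - x i)^2 + B0 * (y i - x i) := by
      show (if i = i then C0 else A0) * (y i - x i)^2 + (if i = i then B0 else 0) * (y i - x i) = _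
      rw [if_pos rfl, if_pos rfl]
    rw [h2]
    ring
  have hlapψ : ∀ y : Euc d, lap d ψ y = -Mf := by
    intro y
    rw [hψ, lap_coordwise hψPdiff hψPderiv2]
    have h1 : ∀ j : Fin d, deriv (deriv (ψP j)) (y j) = 2*(if j = i then C0 else A0) := by
      intro j
      rw [hψPderiv j, deriv_lin]
    rw [Finset.sum_congr rfl (fun j _ => h1 j)]
    have h2 : ∀ j : Fin d, 2*(if j = i then C0 else A0)
        = 2*A0 + (if j = i then 2*C0 - 2*A0 else 0) := by
      intro j; split <;> ring
    rw [Finset.sum_congr rfl (fun j _ => h2 j), Finset.sum_add_distrib,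
      Finset.sum_ite_eq' Finset.univ i (fun _ => 2*C0 - 2*A0), if_pos (Finset.mem_univ i),
      Finset.sum_const, Finset.card_univ, Fintype.card_fin]
    have hd0 : (1:ℝ) ≤ (d:ℝ) := by exact_mod_cast hd1
    rw [hA0, hC0]
    ring
  -- φ and w
  set φ : Euc d → ℝ := fun y => (1/2) * (u y + (-1) * u (refl d i c y)) with hφ
  set w : Euc d → ℝ := fun y => φ y + (-1) * ψ y with hw
  have hφbd : ∀ y ∈ Ucl, φ y ≤ Mu := by
    intro y hy
    have h1 := abs_le.mp (hMu y (hUclK hy))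
    have h2 := abs_le.mp (hMu _ (hσUcl y hy))
    rw [hφ]
    dsimp only
    linarith [h1.2, h2.1]
  -- max principle hypotheses
  have hwcont : ContinuousOn w (closure U) := by
    have huK : ContinuousOn u K := hu.continuousOn
    have h1 : ContinuousOn u (closure U) := huK.mono (hUclosed.trans hUclK)
    have hmap : Set.MapsTo (refl d i c) (closure U) K := fun y hy => hσUcl y (hUclosed hy)
    have h2 : ContinuousOn (fun y => u (refl d i c y)) (closure U) :=
      huK.comp ((continuous_refl i c).continuousOn) hmap
    exact (continuousOn_const.mul (h1.add (continuousOn_const.mul h2))).add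
      (continuousOn_const.mul (hψCD.continuous.continuousOn))
  have hwCD : ∀ y ∈ U, ContDiffAt ℝ 2 w y := by
    intro y hy
    have hyK : y ∈ K := hCopenK (hUCopen hy)
    have hσyK : refl d i c y ∈ K := hCopenK (hσCopen y (hUCopen hy))
    have h2 : ContDiffAt ℝ 2 (fun y => u (refl d i c y)) y :=
      (hucd _ hσyK).comp y hσCD.contDiffAt
    exact (contDiffAt_const.mul ((hucd y hyK).add (contDiffAt_const.mul h2))).add
      (contDiffAt_const.mul hψCD.contDiffAt)
  have hwlap : ∀ y ∈ U, 0 ≤ lap d w y := by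
    intro y hy
    have hyK : y ∈ K := hCopenK (hUCopen hy)
    have hσyK : refl d i c y ∈ K := hCopenK (hσCopen y (hUCopen hy))
    have h2 : ContDiffAt ℝ 2 (fun y => u (refl d i c y)) y :=
      (hucd _ hσyK).comp y hσCD.contDiffAt
    have hφCD : ContDiffAt ℝ 2 φ y :=
      contDiffAt_const.mul ((hucd y hyK).add (contDiffAt_const.mul h2))
    have e1 : lap d w y = lap d φ y + (-1) * lap d ψ y := by
      rw [hw, lap_add hφCD (contDiffAt_const.mul hψCD.contDiffAt),
        lap_const_mul (-1) hψCD.contDiffAt]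
    have e2 : lap d φ y = (1/2) * (lap d u y + (-1) * lap d (fun z => u (refl d i c z)) y) := by
      rw [hφ, lap_const_mul (1/2) ((hucd y hyK).add (contDiffAt_const.mul h2)),
        lap_add (hucd y hyK) (contDiffAt_const.mul h2),
        lap_const_mul (-1) h2]
    have e3 : lap d (fun z => u (refl d i c z)) y = lap d u (refl d i c y) :=
      lap_comp_refl (hucd _ hσyK)
    have e4 : lap d u y = -f y := by have := heq y hyK; linarith
    have e5 : lap d u (refl d i c y) = -f (refl d i c y) := by
      have := heq _ hσyK; linarith
    have h6 := abs_le.mp (hMf y hyK)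
    have h7 := abs_le.mp (hMf _ hσyK)
    rw [e1, e2, e3, e4, e5, hlapψ]
    linarith [h6.1, h6.2, h7.1, h7.2]
  have hwfr : ∀ y ∈ frontier U, w y ≤ 0 := by
    intro y hy
    rw [frontier, hUopen.interior_eq] at hy
    have hyUcl : y ∈ Ucl := hUclosed hy.1
    have hynU : y ∉ U := hy.2
    have hTnn : 0 ≤ ∑ j ∈ Finset.univ.erase i, (y j - x j)^2 :=
      Finset.sum_nonneg (fun j _ => sq_nonneg _)
    have hA0nn : 0 ≤ A0 := by rw [hA0]; exact div_nonneg hMu0 (by positivity)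
    by_cases hci : 0 < y i - x i
    · -- some coordinate hits R
      have hex : ∃ j, ¬ |y j - x j| < R := by
        by_contra hno
        push_neg at hno
        exact hynU ⟨hci, hno⟩
      obtain ⟨j0, hj0⟩ := hex
      have hj0R : |y j0 - x j0| = R := le_antisymm (hyUcl.2 j0) (not_lt.mp hj0)
      have hφy : φ y ≤ Mu := hφbd y hyUcl
      have hψy : Mu ≤ ψ y := by
        rw [hψval]
        by_cases hji : j0 = i
        · subst hji
          have hciR : y j0 - x j0 = R := by
            rw [abs_of_nonneg hyUcl.1] at hj0R
            exact hj0R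
          rw [hciR]
          have hBC : C0 * R^2 + B0 * R = Mu := by
            rw [hB0, hC0]
            field_simp
            ring
          nlinarith [mul_nonneg hA0nn hTnn]
        · have hT1 : R^2 ≤ ∑ j ∈ Finset.univ.erase i, (y j - x j)^2 := by
            have : (y j0 - x j0)^2 = R^2 := by rw [← hj0R, sq_abs]
            rw [← this]
            apply Finset.single_le_sum (f := fun j => (y j - x j)^2)
              (fun j _ => sq_nonneg _) (Finset.mem_erase.mpr ⟨hji, Finset.mem_univ j0⟩)
          have hAT : Mu ≤ A0 * (∑ j ∈ Finset.univ.erase i, (y j - x j)^2) := by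
            have : A0 * R^2 = Mu := by rw [hA0]; field_simp
            nlinarith
          have hciR : y i - x i ≤ R := by
            have := hyUcl.2 i
            rw [abs_le] at this
            exact this.2
          have hC0np : C0 ≤ 0 := by
            rw [hC0]
            have hd0 : (1:ℝ) ≤ (d:ℝ) := by exact_mod_cast hd1
            have : 0 ≤ ((d:ℝ)-1)*Mu/R^2 := div_nonneg (by nlinarith) (by positivity)
            linarith
          have hCB : C0 * R + B0 = Mu/R := by
            rw [hB0, hC0]
            field_simp
            ring
          have hlin : 0 ≤ C0 * (y i - x i)^2 + B0 * (y i - x i) := by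
            have h1 : C0 * R + B0 ≥ 0 := by
              rw [hCB]; exact div_nonneg hMu0 hR.le
            have h2 : 0 ≤ C0 * (y i - x i) + B0 := by nlinarith [hci.le]
            nlinarith [hci.le]
          linarith
      rw [hw]
      dsimp only
      linarith
    · -- y i = x i : reflection fixes y
      have hci0 : y i - x i = 0 := le_antisymm (not_lt.mp hci) hyUcl.1
      have hσy : refl d i c y = y := by
        ext j
        rw [refl_apply]
        by_cases hj : j = i
        · subst hj; rw [if_pos rfl, hc]
          have : y j = x j := by linarith
          rw [this]; ring
        · rw [if_neg hj]
      have hφ0 : φ y = 0 := by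
        rw [hφ]
        dsimp only
        rw [hσy]
        ring
      have hψnn : 0 ≤ ψ y := by
        rw [hψval, hci0]
        have := mul_nonneg hA0nn hTnn
        nlinarith
      rw [hw]
      dsimp only
      rw [hφ0]
      linarith
  have hmaxp := max_principle hd1 hUopen hUb hwcont hwCD hwlap hwfr
  -- conclude along the segment
  set L : ℝ → Euc d := fun t => x + t • eb d i with hL
  have hL0 : L 0 = x := by simp [hL]
  have hLcoord : ∀ (t : ℝ) (j : Fin d), L t j - x j = if j = i then t else 0 := by
    intro t j
    have : L t j = x j + t * (eb d i j) := rfl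
    rw [this]
    simp only [eb, EuclideanSpace.single_apply]
    by_cases hj : j = i
    · subst hj; simp
    · simp [hj]
  have hLU : ∀ t ∈ Set.Ioo (0:ℝ) R, L t ∈ U := by
    intro t ht
    constructor
    · rw [hLcoord t i, if_pos rfl]; exact ht.1
    · intro j
      rw [hLcoord t j]
      by_cases hj : j = i
      · subst hj; rw [if_pos rfl, abs_of_pos ht.1]; exact ht.2
      · rw [if_neg hj]; simpa using hR
  -- derivative of w at x in direction eb i
  have hDu : HasFDerivAt u (fderiv ℝ u x) x :=
    ((hucd x hx).differentiableAt (by norm_num)).hasFDerivAt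
  have hDσ : HasFDerivAt (fun y => u (refl d i c y)) ((fderiv ℝ u x).comp (reflCLM d i)) x := by
    have h1 : HasFDerivAt u (fderiv ℝ u x) (refl d i c x) := by rw [hσx]; exact hDu
    exact h1.comp x (hasFDerivAt_refl i c x)
  have hDψ : HasFDerivAt ψ (∑ j, (deriv (ψP j) (x j)) • (EuclideanSpace.proj (𝕜 := ℝ) j)) x :=
    hasFDerivAt_coordwise hψPdiff x
  have hDφ : HasFDerivAt φ ((1/2 : ℝ) • (fderiv ℝ u x + (-1 : ℝ) •
      ((fderiv ℝ u x).comp (reflCLM d i)))) x :=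
    (hDu.add (hDσ.const_mul (-1))).const_mul (1/2)
  have hDw : HasFDerivAt w ((1/2 : ℝ) • (fderiv ℝ u x + (-1 : ℝ) •
      ((fderiv ℝ u x).comp (reflCLM d i))) + (-1 : ℝ) •
      (∑ j, (deriv (ψP j) (x j)) • (EuclideanSpace.proj (𝕜 := ℝ) j))) x :=
    hDφ.add (hDψ.const_mul (-1))
  have hDval : ((1/2 : ℝ) • (fderiv ℝ u x + (-1 : ℝ) •
      ((fderiv ℝ u x).comp (reflCLM d i))) + (-1 : ℝ) •
      (∑ j, (deriv (ψP j) (x j)) • (EuclideanSpace.proj (𝕜 := ℝ) j))) (eb d i)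
      = fderiv ℝ u x (eb d i) - B0 := by
    rw [ContinuousLinearMap.add_apply, ContinuousLinearMap.smul_apply,
      ContinuousLinearMap.add_apply, ContinuousLinearMap.smul_apply,
      ContinuousLinearMap.comp_apply, reflCLM_eb, if_pos rfl,
      ContinuousLinearMap.smul_apply, ContinuousLinearMap.sum_apply]
    have hsum : ∑ j, ((deriv (ψP j) (x j)) • (EuclideanSpace.proj (𝕜 := ℝ) j)) (eb d i)
        = B0 := by
      have h1 : ∀ j : Fin d, ((deriv (ψP j) (x j)) • (EuclideanSpace.proj (𝕜 := ℝ) j)) (eb d i)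
          = if j = i then deriv (ψP j) (x j) else 0 := by
        intro j
        rw [ContinuousLinearMap.smul_apply, proj_eb]
        by_cases hj : j = i
        · subst hj; simp
        · simp [hj]
      rw [Finset.sum_congr rfl (fun j _ => h1 j),
        Finset.sum_ite_eq' Finset.univ i (fun j => deriv (ψP j) (x j)),
        if_pos (Finset.mem_univ i)]
      rw [hψPderiv i]
      simp
    rw [hsum]
    simp [smul_eq_mul]
    ring
  -- slope argument
  have hg : HasDerivAt (fun t => w (L t)) (fderiv ℝ u x (eb d i) - B0) 0 := by
    have hLd : ∀ t, HasDerivAt L (eb d i) t := by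
      intro t
      have h1 : HasDerivAt (fun t : ℝ => t • eb d i) ((1:ℝ) • eb d i) t :=
        (hasDerivAt_id t).smul_const (eb d i)
      have h2 := h1.const_add x; rw [one_smul] at h2; exact h2
    have h2 : HasFDerivAt w ((1/2 : ℝ) • (fderiv ℝ u x + (-1 : ℝ) •
        ((fderiv ℝ u x).comp (reflCLM d i))) + (-1 : ℝ) •
        (∑ j, (deriv (ψP j) (x j)) • (EuclideanSpace.proj (𝕜 := ℝ) j))) (L 0) := by
      rw [hL0]; exact hDw
    have h3 := h2.comp_hasDerivAt 0 (hLd 0)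
    rw [hDval] at h3
    exact h3
  have hw0 : w (L 0) = 0 := by
    rw [hL0, hw]
    dsimp only
    have hφx : φ x = 0 := by
      rw [hφ]
      dsimp only
      rw [hσx]
      ring
    have hψx : ψ x = 0 := by
      rw [hψval]
      simp
    rw [hφx, hψx]
    ring
  have hslope := hasDerivAt_iff_tendsto_slope.mp hg
  have hslope' : Tendsto (slope (fun t => w (L t)) 0) (𝓝[>] (0:ℝ))
      (𝓝 (fderiv ℝ u x (eb d i) - B0)) :=
    hslope.mono_left (nhdsWithin_mono 0 (fun t (ht : t ∈ Set.Ioi 0) => ne_of_gt ht))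
  have hev : ∀ᶠ t in 𝓝[>] (0:ℝ), slope (fun t => w (L t)) 0 t ≤ 0 := by
    have hmem : Set.Ioo (0:ℝ) R ∈ 𝓝[>] (0:ℝ) := Ioo_mem_nhdsGT_of_mem ⟨le_refl 0, hR⟩
    filter_upwards [hmem] with t ht
    have h1 : w (L t) ≤ 0 := hmaxp _ (hLU t ht)
    have h2 : slope (fun t => w (L t)) 0 t = w (L t) / t := by
      simp [slope, hw0, div_eq_inv_mul]
    rw [h2]
    apply div_nonpos_of_nonpos_of_nonneg h1 ht.1.le
  have hfinal : fderiv ℝ u x (eb d i) - B0 ≤ 0 := le_of_tendsto hslope' hev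
  linarith


/-! ### Norm of the gradient via coordinates -/

lemma norm_clm_sq (L : Euc d →L[ℝ] ℝ) : ‖L‖^2 = ∑ i, (L (eb d i))^2 := by
  set v : Euc d := (InnerProductSpace.toDual ℝ (Euc d)).symm L with hv
  have hLy : ∀ y : Euc d, L y = inner ℝ v y := by
    intro y
    rw [hv, InnerProductSpace.toDual_symm_apply]
  have hnorm : ‖L‖ = ‖v‖ := by
    rw [hv, LinearIsometryEquiv.norm_map]
  rw [hnorm, EuclideanSpace.norm_eq, Real.sq_sqrt (by positivity)]
  apply Finset.sum_congr rfl
  intro j _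
  rw [hLy (eb d j)]
  have : (inner ℝ v (eb d j) : ℝ) = v j := by
    rw [show eb d j = EuclideanSpace.single j (1:ℝ) from rfl, EuclideanSpace.inner_single_right]
    simp
  rw [this, Real.norm_eq_abs, sq_abs]

set_option maxHeartbeats 800000 in
lemma grad_sq_bound (hd1 : 1 ≤ d) {K : Set (Euc d)} (hK : IsOpen K)
    {u f : Euc d → ℝ} (hu : ContDiffOn ℝ 2 u K) (heq : ∀ y ∈ K, -lap d u y = f y)
    {Mu Mf : ℝ} (hMu : ∀ y ∈ K, |u y| ≤ Mu) (hMf : ∀ y ∈ K, |f y| ≤ Mf)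
    {x : Euc d} (hx : x ∈ K) {R : ℝ} (hR : 0 < R)
    (hcube : {y : Euc d | ∀ j, |y j - x j| ≤ R} ⊆ K) :
    ‖fderiv ℝ u x‖^2 ≤ 2*(d:ℝ)^3*(Mu/R)^2 + (d:ℝ)*(Mf*R)^2/2 := by
  have hd0 : (1:ℝ) ≤ (d:ℝ) := by exact_mod_cast hd1
  have habs : ∀ i, |fderiv ℝ u x (eb d i)| ≤ (d:ℝ)*Mu/R + Mf*R/2 := by
    intro i
    rw [abs_le]
    refine ⟨?_, coord_deriv_bound hd1 hK hu heq hMu hMf hx hR hcube i⟩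
    have hu' : ContDiffOn ℝ 2 (fun y => -u y) K := hu.neg
    have hequ : ∀ y ∈ K, -lap d (fun z => -u z) y = (fun z => -f z) y := by
      intro y hy
      have h2 : (fun z : Euc d => -u z) = fun z => (-1) * u z := by funext z; ring
      have h1 : lap d (fun z => -u z) y = - lap d u y := by
        rw [h2, lap_const_mul (-1) (hu.contDiffAt (hK.mem_nhds hy))]
        ring
      have h3 := heq y hy
      dsimp only
      rw [h1]
      linarith
    have hMu' : ∀ y ∈ K, |(fun z : Euc d => -u z) y| ≤ Mu := by
      intro y hy; simpa [abs_neg] using hMu y hy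
    have hMf' : ∀ y ∈ K, |(fun z : Euc d => -f z) y| ≤ Mf := by
      intro y hy; simpa [abs_neg] using hMf y hy
    have hlow := coord_deriv_bound hd1 hK hu' hequ hMu' hMf' hx hR hcube i
    rw [fderiv_fun_neg] at hlow
    rw [ContinuousLinearMap.neg_apply] at hlow
    linarith
  rw [norm_clm_sq]
  have hstep : ∀ i : Fin d, (fderiv ℝ u x (eb d i))^2 ≤ ((d:ℝ)*Mu/R + Mf*R/2)^2 := by
    intro i
    rw [← sq_abs]
    exact pow_le_pow_left₀ (abs_nonneg _) (habs i) 2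
  calc ∑ i, (fderiv ℝ u x (eb d i))^2 ≤ ∑ _i : Fin d, ((d:ℝ)*Mu/R + Mf*R/2)^2 :=
        Finset.sum_le_sum (fun i _ => hstep i)
  _ = (d:ℝ) * ((d:ℝ)*Mu/R + Mf*R/2)^2 := by simp [mul_comm]
  _ ≤ 2*(d:ℝ)^3*(Mu/R)^2 + (d:ℝ)*(Mf*R)^2/2 := by
      have hrw : (d:ℝ)*Mu/R + Mf*R/2 = (d:ℝ)*(Mu/R) + (Mf*R)/2 := by ring
      rw [hrw]
      set P := Mu/R with hP
      set Q := Mf*R with hQ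
      nlinarith [mul_nonneg (by linarith : (0:ℝ) ≤ (d:ℝ)) (sq_nonneg ((d:ℝ)*P - Q/2)), hd0]

end GradEst

open GradEst Topology Filter

set_option maxHeartbeats 800000

/-- interpolation (Gagliardo-Nirenberg type) gradient estimate:
if −Δu = f on an open set K with u, f bounded on K, then
|∇u(x)|² ≤ C(‖f‖_∞‖u‖_∞ + dist(x,∂K)⁻²‖u‖_∞²), with C depending only on d. -/
theorem gradient_interpolation_estimate (d : ℕ) (hd1 : 1 ≤ d) :
    ∃ C : ℝ, 0 < C ∧ ∀ K : Set (Euc d), IsOpen K → K.Nonempty →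
      ∀ u f : Euc d → ℝ, ContDiffOn ℝ 2 u K →
        (∀ x ∈ K, -lap d u x = f x) →
        ∀ Mu Mf : ℝ, (∀ x ∈ K, |u x| ≤ Mu) → (∀ x ∈ K, |f x| ≤ Mf) →
          ∀ x ∈ K, ‖fderiv ℝ u x‖ ^ 2
            ≤ C * (Mf * Mu + Mu ^ 2 / (Metric.infDist x Kᶜ) ^ 2) := by
  classical
  have hd0 : (1:ℝ) ≤ (d:ℝ) := by exact_mod_cast hd1
  have hdpos : (0:ℝ) < (d:ℝ) := by linarith
  have hp34 : (d:ℝ)^3 ≤ (d:ℝ)^4 := by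
    nlinarith [mul_nonneg (pow_nonneg hdpos.le 3) (by linarith : (0:ℝ) ≤ (d:ℝ) - 1)]
  have h13 : 1 ≤ (d:ℝ)^3 := by
    nlinarith [mul_nonneg (by linarith : (0:ℝ) ≤ (d:ℝ)-1)
      (by positivity : (0:ℝ) ≤ (d:ℝ)^2 + (d:ℝ) + 1)]
  have hp14 : (d:ℝ) ≤ (d:ℝ)^4 := by
    nlinarith [mul_nonneg hdpos.le (by linarith : (0:ℝ) ≤ (d:ℝ)^3 - 1)]
  have hcoef1 : 2*(d:ℝ)^3 + (d:ℝ)/2 ≤ 20*(d:ℝ)^4 + 20 := by linarith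
  have hcoef2 : 8*(d:ℝ)^4 ≤ 20*(d:ℝ)^4 + 20 := by nlinarith [pow_nonneg hdpos.le 4]
  refine ⟨20*(d:ℝ)^4 + 20, by positivity, ?_⟩
  intro K hKo _hKne u f hu heq Mu Mf hMu hMf x hx
  have hMu0 : 0 ≤ Mu := le_trans (abs_nonneg _) (hMu x hx)
  have hMf0 : 0 ≤ Mf := le_trans (abs_nonneg _) (hMf x hx)
  set δ := Metric.infDist x Kᶜ with hδ
  by_cases hMuz : Mu = 0
  · -- u vanishes on K, hence near x
    have hev : u =ᶠ[𝓝 x] (fun _ => (0:ℝ)) := by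
      filter_upwards [hKo.mem_nhds hx] with y hy
      have h1 := hMu y hy
      rw [hMuz] at h1
      exact abs_eq_zero.mp (le_antisymm h1 (abs_nonneg _))
    have h2 : fderiv ℝ u x = fderiv ℝ (fun _ : Euc d => (0:ℝ)) x := hev.fderiv_eq
    rw [h2, fderiv_fun_const]
    simp only [Pi.zero_apply, norm_zero, hMuz]
    norm_num
  have hMup : 0 < Mu := lt_of_le_of_ne hMu0 (Ne.symm hMuz)
  have hdist : ∀ (R : ℝ) (y : Euc d), (∀ j, |y j - x j| ≤ R) → dist y x ≤ R * Real.sqrt d := by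
    intro R y hy
    rw [EuclideanSpace.dist_eq]
    have h1 : ∑ j, dist (y j) (x j) ^ 2 ≤ (d:ℝ) * R^2 := by
      calc ∑ j, dist (y j) (x j) ^ 2 ≤ ∑ _j : Fin d, R^2 := by
            apply Finset.sum_le_sum
            intro j _
            rw [Real.dist_eq]
            nlinarith [hy j, abs_nonneg (y j - x j)]
      _ = (d:ℝ) * R^2 := by simp [mul_comm]
    have hR0 : 0 ≤ R := le_trans (abs_nonneg _) (hy ⟨0, hd1⟩)
    calc Real.sqrt (∑ j, dist (y j) (x j) ^ 2) ≤ Real.sqrt ((d:ℝ) * R^2) := Real.sqrt_le_sqrt h1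
    _ = R * Real.sqrt d := by
        rw [mul_comm, Real.sqrt_mul (by positivity), Real.sqrt_sq hR0]
  have key : ∀ R : ℝ, 0 < R → ({y : Euc d | ∀ j, |y j - x j| ≤ R} ⊆ K) →
      ‖fderiv ℝ u x‖^2 ≤ 2*(d:ℝ)^3*(Mu/R)^2 + (d:ℝ)*(Mf*R)^2/2 :=
    fun R hR hc => grad_sq_bound hd1 hKo hu heq hMu hMf hx hR hc
  by_cases hKc : Kᶜ = ∅
  · have hKuniv : K = Set.univ := by rwa [Set.compl_empty_iff] at hKc
    have hδ0 : δ = 0 := by rw [hδ, hKc, Metric.infDist_empty]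
    have hsub : ∀ R : ℝ, {y : Euc d | ∀ j, |y j - x j| ≤ R} ⊆ K := by
      rw [hKuniv]; exact fun R y _ => trivial
    rw [hδ0]
    by_cases hMfz : Mf = 0
    · have hG0 : ‖fderiv ℝ u x‖^2 ≤ 0 := by
        have hforall : ∀ ε : ℝ, 0 < ε → ‖fderiv ℝ u x‖^2 ≤ 0 + ε := by
          intro ε hε
          set R := Real.sqrt (2*(d:ℝ)^3*Mu^2/ε) with hRdef
          have hRpos : 0 < R := Real.sqrt_pos.mpr (by positivity)
          have h1 := key R hRpos (hsub R)
          have hRsq : R^2 = 2*(d:ℝ)^3*Mu^2/ε := Real.sq_sqrt (by positivity)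
          have h2 : 2*(d:ℝ)^3*(Mu/R)^2 = ε := by
            rw [div_pow, ← mul_div_assoc, hRsq, div_div_eq_mul_div,
              mul_comm (2*(d:ℝ)^3*Mu^2) ε, mul_div_assoc,
              div_self (by positivity : (2*(d:ℝ)^3*Mu^2) ≠ 0), mul_one]
          rw [hMfz] at h1
          simp only [zero_mul, ne_eq, OfNat.ofNat_ne_zero, not_false_eq_true, zero_pow,
            mul_zero, zero_div, add_zero] at h1
          linarith
        linarith [le_of_forall_pos_le_add hforall]
      have hz : (20*(d:ℝ)^4 + 20)*(Mf*Mu + Mu^2/(0:ℝ)^2) = 0 := by rw [hMfz]; norm_num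
      rw [hz]
      exact hG0
    · have hMfp : 0 < Mf := lt_of_le_of_ne hMf0 (Ne.symm hMfz)
      set R := Real.sqrt (Mu/Mf) with hRdef
      have hRpos : 0 < R := Real.sqrt_pos.mpr (by positivity)
      have hRsq : R^2 = Mu/Mf := Real.sq_sqrt (by positivity)
      have h1 := key R hRpos (hsub R)
      have h2 : (Mu/R)^2 = Mu*Mf := by
        rw [div_pow, hRsq]
        field_simp
      have h3 : (Mf*R)^2 = Mf*Mu := by
        rw [mul_pow, hRsq]
        field_simp
      rw [h2, h3] at h1
      have hz : Mu^2/(0:ℝ)^2 = 0 := by norm_num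
      rw [hz]
      have hMM : 0 ≤ Mf*Mu := mul_nonneg hMf0 hMu0
      have e1 := mul_le_mul_of_nonneg_right hcoef1 hMM
      nlinarith [e1]
  · have hKcc : (Kᶜ).Nonempty := Set.nonempty_iff_ne_empty.mpr hKc
    have hδpos : 0 < δ := by
      rw [hδ]
      exact (hKo.isClosed_compl.notMem_iff_infDist_pos hKcc).mp (by simpa using hx)
    have hadm : ∀ R : ℝ, 0 < R → R * Real.sqrt d < δ →
        {y : Euc d | ∀ j, |y j - x j| ≤ R} ⊆ K := by
      intro R hR hRδ y hy
      by_contra hyK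
      have h1 : δ ≤ dist x y := Metric.infDist_le_dist_of_mem hyK
      have h2 : dist y x ≤ R * Real.sqrt d := hdist R y hy
      rw [dist_comm] at h2
      linarith
    have hsd : (0:ℝ) < Real.sqrt d := Real.sqrt_pos.mpr hdpos
    set R0 := δ/(2*Real.sqrt d) with hR0def
    have hR0pos : 0 < R0 := div_pos hδpos (by positivity)
    have hR0δ : R0 * Real.sqrt d = δ/2 := by
      rw [hR0def]
      field_simp
    have hR0sq : R0^2 = δ^2/(4*(d:ℝ)) := by
      rw [hR0def, div_pow, mul_pow, Real.sq_sqrt hdpos.le]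
      norm_num
    have hXnn : 0 ≤ Mu^2/δ^2 := by positivity
    have hMM : 0 ≤ Mf*Mu := mul_nonneg hMf0 hMu0
    have eX := mul_le_mul_of_nonneg_right hcoef2 hXnn
    by_cases hMfz : Mf = 0
    · have h1 := key R0 hR0pos (hadm R0 hR0pos (by rw [hR0δ]; linarith))
      rw [hMfz] at h1
      have h2 : (Mu/R0)^2 = 4*(d:ℝ)*Mu^2/δ^2 := by
        rw [div_pow, hR0sq, div_div_eq_mul_div]
        ring
      rw [h2] at h1
      simp only [zero_mul, ne_eq, OfNat.ofNat_ne_zero, not_false_eq_true, zero_pow,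
        mul_zero, zero_div, add_zero] at h1
      rw [hMfz]
      have h1' : 2*(d:ℝ)^3*(4*(d:ℝ)*Mu^2/δ^2) = 8*(d:ℝ)^4*(Mu^2/δ^2) := by ring
      rw [h1'] at h1
      linarith [eX]
    · have hMfp : 0 < Mf := lt_of_le_of_ne hMf0 (Ne.symm hMfz)
      set R1 := Real.sqrt (Mu/Mf) with hR1def
      have hR1pos : 0 < R1 := Real.sqrt_pos.mpr (by positivity)
      have hR1sq : R1^2 = Mu/Mf := Real.sq_sqrt (by positivity)
      by_cases hcase : R1 ≤ R0
      · have h1 := key R1 hR1pos (hadm R1 hR1pos (by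
          calc R1 * Real.sqrt d ≤ R0 * Real.sqrt d :=
                mul_le_mul_of_nonneg_right hcase hsd.le
          _ = δ/2 := hR0δ
          _ < δ := by linarith))
        have h2 : (Mu/R1)^2 = Mu*Mf := by
          rw [div_pow, hR1sq]
          field_simp
        have h3 : (Mf*R1)^2 = Mf*Mu := by
          rw [mul_pow, hR1sq]
          field_simp
        rw [h2, h3] at h1
        have e1 := mul_le_mul_of_nonneg_right hcoef1 hMM
        have e2 := mul_nonneg (by positivity : (0:ℝ) ≤ 20*(d:ℝ)^4 + 20) hXnn
        nlinarith [e1, e2]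
      · push_neg at hcase
        have h1 := key R0 hR0pos (hadm R0 hR0pos (by rw [hR0δ]; linarith))
        have h2 : (Mu/R0)^2 = 4*(d:ℝ)*Mu^2/δ^2 := by
          rw [div_pow, hR0sq, div_div_eq_mul_div]
          ring
        have hR0sq' : R0^2 ≤ Mu/Mf := by
          have h5 : R0^2 < R1^2 := by nlinarith [hR0pos.le, hcase]
          linarith [hR1sq ▸ h5]
        have h3 : (Mf*R0)^2 ≤ Mf*Mu := by
          rw [mul_pow]
          calc Mf^2*R0^2 ≤ Mf^2*(Mu/Mf) :=
                mul_le_mul_of_nonneg_left hR0sq' (sq_nonneg Mf)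
          _ = Mf*Mu := by field_simp
        rw [h2] at h1
        have h1' : 2*(d:ℝ)^3*(4*(d:ℝ)*Mu^2/δ^2) = 8*(d:ℝ)^4*(Mu^2/δ^2) := by ring
        rw [h1'] at h1
        have e3 : (d:ℝ)*(Mf*R0)^2/2 ≤ (d:ℝ)*(Mf*Mu)/2 := by
          nlinarith [mul_le_mul_of_nonneg_left h3 (show (0:ℝ) ≤ (d:ℝ)/2 by positivity)]
        have e4 := mul_le_mul_of_nonneg_right
          (show (d:ℝ)/2 ≤ 20*(d:ℝ)^4+20 from by linarith) hMM
        linarith [eX, e3, e4]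


end
end
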